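/- Let $p_1 \ge \dots \ge p_N$ be reals in $(0,1)$, let $X_i$ be independent Bernoulli$(p_i)$, $\tilde n = \sum_{i=1}^N p_i$, and suppose $\tilde n > 1$. Let $D = \{1, \dots, |D|\}$ be a prefix such that $\sum_{i=3}^{|D|} p_i = 3\log \tilde n$, and set $d = \sum_{i\in D} X_i$. Then $\Pr[d \le 2] \le \frac{3}{\tilde n}$. -/

import Mathlib

open MeasureTheory ProbabilityTheory

open Finset in
lemma sum_powersetCard_prod_le (p : ℕ → ℝ) :
    ∀ (s : Finset ℕ), (∀ i ∈ s, 0 ≤ p i) → ∀ (k : ℕ),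
      ∑ S ∈ s.powersetCard k, ∏ i ∈ S, p i ≤ (∑ i ∈ s, p i) ^ k := by
  intro s
  induction s using Finset.induction_on with
  | empty =>
    intro _ k
    cases k with
    | zero => simp
    | succ k =>
      rw [Finset.powersetCard_eq_empty.mpr (by simp)]
      simp
  | @insert a s ha ih =>
    intro hnn k
    have hpa : 0 ≤ p a := hnn a (mem_insert_self a s)
    have hnn' : ∀ i ∈ s, 0 ≤ p i := fun i hi => hnn i (mem_insert_of_mem hi)
    have hs0 : 0 ≤ ∑ i ∈ s, p i := Finset.sum_nonneg hnn'
    cases k with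
    | zero => simp
    | succ k =>
      rw [Finset.powersetCard_succ_insert ha]
      have hdisj : Disjoint (s.powersetCard (k+1)) ((s.powersetCard k).image (insert a)) := by
        rw [Finset.disjoint_left]
        intro S hS hS'
        obtain ⟨T, hT, rfl⟩ := Finset.mem_image.mp hS'
        have := (Finset.mem_powersetCard.mp hS).1
        exact ha (this (mem_insert_self a T))
      rw [Finset.sum_union hdisj]
      have himg : ∑ S ∈ (s.powersetCard k).image (insert a), ∏ i ∈ S, p i
          = ∑ S ∈ s.powersetCard k, p a * ∏ i ∈ S, p i := by
        rw [Finset.sum_image]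
        · refine Finset.sum_congr rfl fun S hS => ?_
          have haS : a ∉ S := fun h => ha ((Finset.mem_powersetCard.mp hS).1 h)
          rw [Finset.prod_insert haS]
        · intro S hS T hT hST
          have haS : a ∉ S := fun h => ha ((Finset.mem_powersetCard.mp hS).1 h)
          have haT : a ∉ T := fun h => ha ((Finset.mem_powersetCard.mp hT).1 h)
          ext x
          constructor
          · intro hx
            have : x ∈ insert a T := hST ▸ mem_insert_of_mem hx
            rcases Finset.mem_insert.mp this with rfl | h
            · exact absurd hx haS
            · exact h
          · intro hx
            have : x ∈ insert a S := hST ▸ mem_insert_of_mem hx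
            rcases Finset.mem_insert.mp this with rfl | h
            · exact absurd hx haT
            · exact h
      rw [himg, ← Finset.mul_sum, Finset.sum_insert ha]
      have h1 := ih hnn' (k+1)
      have h2 := ih hnn' k
      have hkey : (∑ i ∈ s, p i) ^ (k+1) + p a * (∑ i ∈ s, p i) ^ k
          ≤ (p a + ∑ i ∈ s, p i) ^ (k+1) := by
        have : (p a + ∑ i ∈ s, p i) ^ (k+1)
            = (p a + ∑ i ∈ s, p i) * (p a + ∑ i ∈ s, p i) ^ k := by ring
        rw [this]
        have hpow : (∑ i ∈ s, p i) ^ k ≤ (p a + ∑ i ∈ s, p i) ^ k :=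
          pow_le_pow_left₀ hs0 (by linarith) k
        have h3 : (p a + ∑ i ∈ s, p i) * (∑ i ∈ s, p i) ^ k
            ≤ (p a + ∑ i ∈ s, p i) * (p a + ∑ i ∈ s, p i) ^ k :=
          mul_le_mul_of_nonneg_left hpow (by linarith)
        have h4 : (∑ i ∈ s, p i) ^ (k+1) + p a * (∑ i ∈ s, p i) ^ k
            = (p a + ∑ i ∈ s, p i) * (∑ i ∈ s, p i) ^ k := by ring
        linarith
      calc ∑ S ∈ s.powersetCard (k+1), ∏ i ∈ S, p i + p a * ∑ S ∈ s.powersetCard k, ∏ i ∈ S, p i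
          ≤ (∑ i ∈ s, p i) ^ (k+1) + p a * (∑ i ∈ s, p i) ^ k := by
            have := mul_le_mul_of_nonneg_left h2 hpa
            linarith
        _ ≤ (p a + ∑ i ∈ s, p i) ^ (k+1) := hkey

/-- With agents `1, …, N` arriving independently, agent `i` with
probability `p i ∈ (0,1)`, probabilities sorted in nonincreasing order,
`ñ = ∑_{i=1}^N p i > 1`, and a prefix `D = {1, …, Dc}` of enforcers chosen so that
`∑_{i=3}^{Dc} p i = 3 log ñ`, the number of arriving enforcers
`d = ∑_{i=1}^{Dc} X i` satisfies `Pr[d ≤ 2] ≤ 3 / ñ`. -/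
theorem prefix_enforcers_prob_bound
    {Ω : Type*} [MeasurableSpace Ω] (μ : Measure Ω) [IsProbabilityMeasure μ]
    (N Dc : ℕ) (p : ℕ → ℝ)
    (hp : ∀ i : ℕ, 1 ≤ i → i ≤ N → 0 < p i ∧ p i < 1)
    (hsorted : ∀ i j : ℕ, 1 ≤ i → i ≤ j → j ≤ N → p j ≤ p i)
    (X : ℕ → Ω → ℕ)
    (hmeas : ∀ i, Measurable (X i))
    (hber : ∀ i ω, X i ω = 0 ∨ X i ω = 1)
    (hprob : ∀ i : ℕ, 1 ≤ i → i ≤ N → μ {ω | X i ω = 1} = ENNReal.ofReal (p i))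
    (hindep : iIndepFun X μ)
    (hDc : Dc ≤ N)
    (hntilde : 1 < ∑ i ∈ Finset.Icc 1 N, p i)
    (hDsum : ∑ i ∈ Finset.Icc 3 Dc, p i = 3 * Real.log (∑ i ∈ Finset.Icc 1 N, p i)) :
    μ {ω | ∑ i ∈ Finset.Icc 1 Dc, X i ω ≤ 2} ≤
      ENNReal.ofReal (3 / ∑ i ∈ Finset.Icc 1 N, p i) := by
  classical
  set nt := ∑ i ∈ Finset.Icc 1 N, p i with hnt
  have hnt1 : (1:ℝ) < nt := hntilde
  have hnt0 : (0:ℝ) < nt := by linarith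
  have hlog : 0 < Real.log nt := Real.log_pos hnt1
  -- Dc ≥ 3
  have hDc3 : 3 ≤ Dc := by
    by_contra h
    push_neg at h
    rw [Finset.Icc_eq_empty (by omega), Finset.sum_empty] at hDsum
    nlinarith
  set I1 := Finset.Icc 1 Dc with hI1
  set I3 := Finset.Icc 3 Dc with hI3
  have hpI1 : ∀ i ∈ I1, 0 < p i ∧ p i < 1 := by
    intro i hi
    rw [hI1, Finset.mem_Icc] at hi
    exact hp i hi.1 (le_trans hi.2 hDc)
  have hq0 : ∀ i ∈ I1, (0:ℝ) ≤ 1 - p i := fun i hi => by linarith [(hpI1 i hi).2]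
  have hq1 : ∀ i ∈ I1, (1:ℝ) - p i ≤ 1 := fun i hi => by linarith [(hpI1 i hi).1]
  have hI3I1 : I3 ⊆ I1 := by
    rw [hI1, hI3]; exact Finset.Icc_subset_Icc (by omega) le_rfl
  have h12I1 : ({1, 2} : Finset ℕ) ⊆ I1 := by
    intro x hx
    rw [hI1, Finset.mem_Icc]
    rcases Finset.mem_insert.mp hx with rfl | hx
    · omega
    · rw [Finset.mem_singleton] at hx; omega
  set 𝒮 := I1.powerset.filter (fun S => S.card ≤ 2) with h𝒮
  -- dropping factors increases a product of numbers in [0,1]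
  have hdrop : ∀ (A B : Finset ℕ), B ⊆ A → A ⊆ I1 →
      ∏ i ∈ A, (1 - p i) ≤ ∏ i ∈ B, (1 - p i) := by
    intro A B hBA hAI
    rw [← Finset.prod_sdiff hBA]
    have h1 : ∏ i ∈ A \ B, (1 - p i) ≤ 1 :=
      Finset.prod_le_one (fun i hi => hq0 i (hAI (Finset.mem_sdiff.mp hi).1))
        (fun i hi => hq1 i (hAI (Finset.mem_sdiff.mp hi).1))
    have h2 : 0 ≤ ∏ i ∈ B, (1 - p i) :=
      Finset.prod_nonneg fun i hi => hq0 i (hAI (hBA hi))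
    exact mul_le_of_le_one_left h2 h1
  -- the matching lemma
  have hmatch : ∀ S ∈ 𝒮, ∏ i ∈ I1 \ S, (1 - p i) ≤ ∏ i ∈ I3, (1 - p i) := by
    intro S hS
    obtain ⟨hSsub, hScard⟩ := Finset.mem_filter.mp hS
    rw [Finset.mem_powerset] at hSsub
    set T := S ∩ I3 with hT
    set U := ({1, 2} : Finset ℕ) \ S with hU
    have hUsub : U ⊆ ({1,2} : Finset ℕ) := Finset.sdiff_subset
    have hUI1 : U ⊆ I1 := hUsub.trans h12I1
    have hTI3 : T ⊆ I3 := Finset.inter_subset_right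
    -- card bound: T.card ≤ U.card
    have hcardTU : T.card ≤ U.card := by
      have hd : Disjoint (S ∩ ({1,2}:Finset ℕ)) T := by
        rw [Finset.disjoint_left]
        intro x hx hx'
        have h1 : x ∈ ({1,2}:Finset ℕ) := (Finset.mem_inter.mp hx).2
        have h2 : x ∈ I3 := (Finset.mem_inter.mp hx').2
        rw [hI3, Finset.mem_Icc] at h2
        rcases Finset.mem_insert.mp h1 with rfl | h1
        · omega
        · rw [Finset.mem_singleton] at h1; omega
      have hcup : (S ∩ ({1,2}:Finset ℕ)) ∪ T ⊆ S :=
        Finset.union_subset Finset.inter_subset_left Finset.inter_subset_left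
      have h1 : (S ∩ ({1,2}:Finset ℕ)).card + T.card ≤ S.card := by
        rw [← Finset.card_union_of_disjoint hd]
        exact Finset.card_le_card hcup
      have h2 : U.card + (({1,2}:Finset ℕ) ∩ S).card = 2 := by
        rw [hU, Finset.card_sdiff_add_card_inter]; rfl
      have h3 : (({1,2}:Finset ℕ) ∩ S).card = (S ∩ ({1,2}:Finset ℕ)).card := by
        rw [Finset.inter_comm]
      omega
    -- the key comparison on {1,2}\S vs S∩I3
    have hqmono : ∀ u t : ℕ, u ∈ ({1,2}:Finset ℕ) → t ∈ I3 → 1 - p u ≤ 1 - p t := by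
      intro u t hu ht
      rw [hI3, Finset.mem_Icc] at ht
      have hu' : 1 ≤ u ∧ u ≤ 2 := by
        rcases Finset.mem_insert.mp hu with rfl | hu
        · omega
        · rw [Finset.mem_singleton] at hu; omega
      have := hsorted u t hu'.1 (by omega) (le_trans ht.2 hDc)
      linarith
    have hcore : ∏ i ∈ U, (1 - p i) ≤ ∏ i ∈ T, (1 - p i) := by
      have hT2 : T.card ≤ 2 := le_trans (Finset.card_le_card Finset.inter_subset_left) hScard
      rcases (by omega : T.card = 0 ∨ T.card = 1 ∨ T.card = 2) with h0 | h1 | h2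
      · rw [Finset.card_eq_zero.mp h0, Finset.prod_empty]
        exact Finset.prod_le_one (fun i hi => hq0 i (hUI1 hi)) (fun i hi => hq1 i (hUI1 hi))
      · obtain ⟨t, hTt⟩ := Finset.card_eq_one.mp h1
        have htI3 : t ∈ I3 := hTI3 (by rw [hTt]; exact Finset.mem_singleton_self t)
        have hUne : U.Nonempty := Finset.card_pos.mp (by omega)
        obtain ⟨u, hu⟩ := hUne
        rw [hTt]
        calc ∏ i ∈ U, (1 - p i) ≤ ∏ i ∈ ({u} : Finset ℕ), (1 - p i) :=
              hdrop U {u} (Finset.singleton_subset_iff.mpr hu) hUI1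
          _ = 1 - p u := Finset.prod_singleton _ _
          _ ≤ 1 - p t := hqmono u t (hUsub hu) htI3
          _ = ∏ i ∈ ({t} : Finset ℕ), (1 - p i) := (Finset.prod_singleton _ _).symm
      · obtain ⟨a, b, hab, hTab⟩ := Finset.card_eq_two.mp h2
        have hU12 : U = ({1, 2} : Finset ℕ) :=
          Finset.eq_of_subset_of_card_le hUsub (by rw [show ({1,2}:Finset ℕ).card = 2 from rfl]; omega)
        have haI3 : a ∈ I3 := hTI3 (by rw [hTab]; exact Finset.mem_insert_self a {b})
        have hbI3 : b ∈ I3 := hTI3 (by rw [hTab]; exact Finset.mem_insert_of_mem (Finset.mem_singleton_self b))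
        rw [hU12, hTab]
        rw [Finset.prod_insert (by simp), Finset.prod_insert (by simp [hab]),
          Finset.prod_singleton, Finset.prod_singleton]
        have h1a : 1 - p 1 ≤ 1 - p a := hqmono 1 a (by simp) haI3
        have h2b : 1 - p 2 ≤ 1 - p b := hqmono 2 b (by simp) hbI3
        have hb0 : 0 ≤ 1 - p 2 := hq0 2 (h12I1 (by simp))
        have ha0 : 0 ≤ 1 - p a := hq0 a (hI3I1 haI3)
        exact mul_le_mul h1a h2b hb0 ha0
    -- assemble
    have hsub2 : (I3 \ T) ∪ U ⊆ I1 \ S := by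
      intro x hx
      rcases Finset.mem_union.mp hx with hx | hx
      · obtain ⟨hx1, hx2⟩ := Finset.mem_sdiff.mp hx
        refine Finset.mem_sdiff.mpr ⟨hI3I1 hx1, fun hxs => hx2 ?_⟩
        exact Finset.mem_inter.mpr ⟨hxs, hx1⟩
      · obtain ⟨hx1, hx2⟩ := Finset.mem_sdiff.mp hx
        exact Finset.mem_sdiff.mpr ⟨h12I1 hx1, hx2⟩
    have hdisjU : Disjoint (I3 \ T) U := by
      rw [Finset.disjoint_left]
      intro x hx hx'
      have h1 : x ∈ I3 := (Finset.mem_sdiff.mp hx).1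
      have h2 : x ∈ ({1,2}:Finset ℕ) := hUsub hx'
      rw [hI3, Finset.mem_Icc] at h1
      rcases Finset.mem_insert.mp h2 with rfl | h2
      · omega
      · rw [Finset.mem_singleton] at h2; omega
    calc ∏ i ∈ I1 \ S, (1 - p i) ≤ ∏ i ∈ (I3 \ T) ∪ U, (1 - p i) :=
          hdrop (I1 \ S) ((I3 \ T) ∪ U) hsub2 Finset.sdiff_subset
      _ = (∏ i ∈ I3 \ T, (1 - p i)) * ∏ i ∈ U, (1 - p i) := Finset.prod_union hdisjU
      _ ≤ (∏ i ∈ I3 \ T, (1 - p i)) * ∏ i ∈ T, (1 - p i) := by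
          refine mul_le_mul_of_nonneg_left hcore ?_
          exact Finset.prod_nonneg fun i hi => hq0 i (hI3I1 (Finset.mem_sdiff.mp hi).1)
      _ = ∏ i ∈ I3, (1 - p i) := Finset.prod_sdiff hTI3
  -- sum over 𝒮 of products of p
  have hppos : ∀ i ∈ I1, 0 ≤ p i := fun i hi => (hpI1 i hi).1.le
  set Sp := ∑ i ∈ I1, p i with hSp
  have hSp0 : 0 ≤ Sp := Finset.sum_nonneg hppos
  have hSpnt : Sp ≤ nt := by
    rw [hSp, hnt]
    refine Finset.sum_le_sum_of_subset_of_nonneg (Finset.Icc_subset_Icc le_rfl hDc) ?_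
    intro i hi _
    rw [Finset.mem_Icc] at hi
    exact (hp i hi.1 hi.2).1.le
  have hsplit : ∑ S ∈ 𝒮, (∏ i ∈ S, p i) ≤ 1 + Sp + Sp ^ 2 := by
    have hsubU : 𝒮 ⊆ (I1.powersetCard 0) ∪ ((I1.powersetCard 1) ∪ (I1.powersetCard 2)) := by
      intro S hS
      obtain ⟨hS1, hS2⟩ := Finset.mem_filter.mp hS
      rw [Finset.mem_powerset] at hS1
      rcases (by omega : S.card = 0 ∨ S.card = 1 ∨ S.card = 2) with h | h | h
      · exact Finset.mem_union_left _ (Finset.mem_powersetCard.mpr ⟨hS1, h⟩)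
      · exact Finset.mem_union_right _ (Finset.mem_union_left _ (Finset.mem_powersetCard.mpr ⟨hS1, h⟩))
      · exact Finset.mem_union_right _ (Finset.mem_union_right _ (Finset.mem_powersetCard.mpr ⟨hS1, h⟩))
    have hdisj12 : Disjoint (I1.powersetCard 1) (I1.powersetCard 2) := by
      rw [Finset.disjoint_left]
      intro S h1 h2
      have := (Finset.mem_powersetCard.mp h1).2
      have := (Finset.mem_powersetCard.mp h2).2
      omega
    have hdisj0 : Disjoint (I1.powersetCard 0) ((I1.powersetCard 1) ∪ (I1.powersetCard 2)) := by
      rw [Finset.disjoint_left]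
      intro S h1 h2
      have h1' := (Finset.mem_powersetCard.mp h1).2
      rcases Finset.mem_union.mp h2 with h | h <;>
        · have := (Finset.mem_powersetCard.mp h).2; omega
    have hnonneg : ∀ S ∈ (I1.powersetCard 0) ∪ ((I1.powersetCard 1) ∪ (I1.powersetCard 2)),
        S ∉ 𝒮 → 0 ≤ ∏ i ∈ S, p i := by
      intro S hS _
      refine Finset.prod_nonneg fun i hi => ?_
      have hsub : S ⊆ I1 := by
        rcases Finset.mem_union.mp hS with h | h
        · exact (Finset.mem_powersetCard.mp h).1
        · rcases Finset.mem_union.mp h with h | h <;> exact (Finset.mem_powersetCard.mp h).1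
      exact hppos i (hsub hi)
    calc ∑ S ∈ 𝒮, (∏ i ∈ S, p i)
        ≤ ∑ S ∈ (I1.powersetCard 0) ∪ ((I1.powersetCard 1) ∪ (I1.powersetCard 2)), ∏ i ∈ S, p i :=
          Finset.sum_le_sum_of_subset_of_nonneg hsubU hnonneg
      _ = (∑ S ∈ I1.powersetCard 0, ∏ i ∈ S, p i) + ((∑ S ∈ I1.powersetCard 1, ∏ i ∈ S, p i)
            + ∑ S ∈ I1.powersetCard 2, ∏ i ∈ S, p i) := by
          rw [Finset.sum_union hdisj0, Finset.sum_union hdisj12]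
      _ ≤ Sp ^ 0 + (Sp ^ 1 + Sp ^ 2) := by
          have h0 := sum_powersetCard_prod_le p I1 hppos 0
          have h1 := sum_powersetCard_prod_le p I1 hppos 1
          have h2 := sum_powersetCard_prod_le p I1 hppos 2
          rw [← hSp] at h0 h1 h2
          linarith
      _ = 1 + Sp + Sp ^ 2 := by ring
  -- product bound via exp
  have hQ3 : ∏ i ∈ I3, (1 - p i) ≤ (nt ^ 3)⁻¹ := by
    have hstep : ∏ i ∈ I3, (1 - p i) ≤ ∏ i ∈ I3, Real.exp (-p i) := by
      refine Finset.prod_le_prod (fun i hi => hq0 i (hI3I1 hi)) (fun i hi => ?_)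
      have := Real.add_one_le_exp (-p i)
      linarith
    have hexp : ∏ i ∈ I3, Real.exp (-p i) = Real.exp (-(3 * Real.log nt)) := by
      rw [← Real.exp_sum, Finset.sum_neg_distrib, hDsum, hnt]
    have hpow : Real.exp (3 * Real.log nt) = nt ^ 3 := by
      rw [show (3:ℝ) * Real.log nt = Real.log (nt ^ 3) by rw [Real.log_pow]; norm_num,
        Real.exp_log (by positivity)]
    rw [hexp, Real.exp_neg, hpow] at hstep
    exact hstep
  have hQ30 : 0 ≤ ∏ i ∈ I3, (1 - p i) :=
    Finset.prod_nonneg fun i hi => hq0 i (hI3I1 hi)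
  -- the real-valued key inequality
  have key : ∑ S ∈ 𝒮, ∏ i ∈ I1, (if i ∈ S then p i else 1 - p i) ≤ 3 / nt := by
    have hsteq : ∀ S ∈ 𝒮, ∏ i ∈ I1, (if i ∈ S then p i else 1 - p i)
        = (∏ i ∈ S, p i) * ∏ i ∈ I1 \ S, (1 - p i) := by
      intro S hS
      have hSsub : S ⊆ I1 := Finset.mem_powerset.mp (Finset.mem_filter.mp hS).1
      rw [← Finset.prod_sdiff hSsub]
      rw [Finset.prod_congr rfl (fun i hi => if_neg (Finset.mem_sdiff.mp hi).2),
        Finset.prod_congr rfl (fun i (hi : i ∈ S) => if_pos hi)]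
      ring
    calc ∑ S ∈ 𝒮, ∏ i ∈ I1, (if i ∈ S then p i else 1 - p i)
        = ∑ S ∈ 𝒮, (∏ i ∈ S, p i) * ∏ i ∈ I1 \ S, (1 - p i) := Finset.sum_congr rfl hsteq
      _ ≤ ∑ S ∈ 𝒮, (∏ i ∈ S, p i) * ∏ i ∈ I3, (1 - p i) := by
          refine Finset.sum_le_sum fun S hS => ?_
          refine mul_le_mul_of_nonneg_left (hmatch S hS) ?_
          have hSsub : S ⊆ I1 := Finset.mem_powerset.mp (Finset.mem_filter.mp hS).1
          exact Finset.prod_nonneg fun i hi => hppos i (hSsub hi)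
      _ = (∑ S ∈ 𝒮, ∏ i ∈ S, p i) * ∏ i ∈ I3, (1 - p i) := (Finset.sum_mul _ _ _).symm
      _ ≤ (1 + Sp + Sp ^ 2) * (nt ^ 3)⁻¹ := by
          refine mul_le_mul hsplit hQ3 hQ30 ?_
          positivity
      _ ≤ (3 * nt ^ 2) * (nt ^ 3)⁻¹ := by
          have h1 : 1 + Sp + Sp ^ 2 ≤ 3 * nt ^ 2 := by nlinarith
          have h2 : (0:ℝ) ≤ (nt ^ 3)⁻¹ := by positivity
          exact mul_le_mul_of_nonneg_right h1 h2
      _ = 3 / nt := by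
          field_simp
  -- measure-theoretic part
  set E : Finset ℕ → Set Ω :=
    fun S => ⋂ i ∈ I1, (if i ∈ S then {ω | X i ω = 1} else {ω | X i ω = 0}) with hE
  have hsubE : {ω | ∑ i ∈ I1, X i ω ≤ 2} ⊆ ⋃ S ∈ 𝒮, E S := by
    intro ω hω
    set S := I1.filter (fun i => X i ω = 1) with hS
    have hScard : S.card ≤ 2 := by
      calc S.card = ∑ i ∈ S, 1 := by simp
        _ = ∑ i ∈ S, X i ω :=
            Finset.sum_congr rfl fun i hi => ((Finset.mem_filter.mp hi).2).symm
        _ ≤ ∑ i ∈ I1, X i ω := Finset.sum_le_sum_of_subset (Finset.filter_subset _ _)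
        _ ≤ 2 := hω
    have hS𝒮 : S ∈ 𝒮 :=
      Finset.mem_filter.mpr ⟨Finset.mem_powerset.mpr (Finset.filter_subset _ _), hScard⟩
    refine Set.mem_iUnion₂.mpr ⟨S, hS𝒮, Set.mem_iInter₂.mpr fun i hi => ?_⟩
    by_cases h : i ∈ S
    · simp only [h, if_true]
      exact (Finset.mem_filter.mp h).2
    · simp only [h, if_false]
      have hne : ¬ X i ω = 1 := fun hx => h (Finset.mem_filter.mpr ⟨hi, hx⟩)
      rcases hber i ω with h0 | h1
      · exact h0
      · exact absurd h1 hne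
  have hmeasE : ∀ S ∈ 𝒮, μ (E S)
      = ENNReal.ofReal (∏ i ∈ I1, (if i ∈ S then p i else 1 - p i)) := by
    intro S hS
    have hindepE : μ (E S) = ∏ i ∈ I1, μ (if i ∈ S then {ω | X i ω = 1} else {ω | X i ω = 0}) := by
      refine hindep.meas_biInter fun i hi => ?_
      by_cases h : i ∈ S
      · simp only [h, if_true]
        exact ⟨{1}, trivial, rfl⟩
      · simp only [h, if_false]
        exact ⟨{0}, trivial, rfl⟩
    rw [hindepE, ENNReal.ofReal_prod_of_nonneg]
    · refine Finset.prod_congr rfl fun i hi => ?_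
      rw [hI1, Finset.mem_Icc] at hi
      have hi1 : 1 ≤ i := hi.1
      have hiN : i ≤ N := le_trans hi.2 hDc
      by_cases h : i ∈ S
      · simp only [h, if_true]
        exact hprob i hi1 hiN
      · simp only [h, if_false]
        have hc : {ω | X i ω = 0} = {ω | X i ω = 1}ᶜ := by
          ext ω
          simp only [Set.mem_setOf_eq, Set.mem_compl_iff]
          rcases hber i ω with h' | h' <;> simp [h']
        have hm : MeasurableSet {ω | X i ω = 1} := hmeas i (measurableSet_singleton 1)
        rw [hc, prob_compl_eq_one_sub hm, hprob i hi1 hiN,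
          ← ENNReal.ofReal_one, ← ENNReal.ofReal_sub _ (hp i hi1 hiN).1.le]
    · intro i hi
      by_cases h : i ∈ S
      · simp only [h, if_true]; exact hppos i hi
      · simp only [h, if_false]; exact hq0 i hi
  calc μ {ω | ∑ i ∈ I1, X i ω ≤ 2} ≤ μ (⋃ S ∈ 𝒮, E S) := measure_mono hsubE
    _ ≤ ∑ S ∈ 𝒮, μ (E S) := measure_biUnion_finset_le _ _
    _ = ∑ S ∈ 𝒮, ENNReal.ofReal (∏ i ∈ I1, (if i ∈ S then p i else 1 - p i)) :=
        Finset.sum_congr rfl hmeasE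
    _ = ENNReal.ofReal (∑ S ∈ 𝒮, ∏ i ∈ I1, (if i ∈ S then p i else 1 - p i)) := by
        rw [ENNReal.ofReal_sum_of_nonneg]
        intro S hS
        refine Finset.prod_nonneg fun i hi => ?_
        by_cases h : i ∈ S
        · simp only [h, if_true]; exact hppos i hi
        · simp only [h, if_false]; exact hq0 i hi
    _ ≤ ENNReal.ofReal (3 / nt) := ENNReal.ofReal_le_ofReal key
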